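/- Let θ₁ < θ₂ < … < θ_m be real numbers in [0, π), let v₁, …, v_m be nonzero vectors in ℝ^N, and let h₁, …, h_m : L → ℝ^N be functions satisfying ∑_{j=1}^m e^{iθ_j} ⟪h_j x, v_j⟫ = 0 for all x (as a complex equation, with real inner products). Then ∑_{j=1}^{m-1} ⟪h_j x, sin(θ_m − θ_j) • v_j⟫ = 0 for all x, and sin(θ_m − θ_j) ≠ 0 for j < m. -/

import Mathlib

theorem elimination_step
    {L : Type*} (m N : ℕ) (θ : Fin (m + 1) → ℝ) (hmono : StrictMono θ)
    (hrange : ∀ j, θ j ∈ Set.Ico 0 Real.pi)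
    (v : Fin (m + 1) → EuclideanSpace ℝ (Fin N)) (hv : ∀ j, v j ≠ 0)
    (h : Fin (m + 1) → L → EuclideanSpace ℝ (Fin N))
    (heq : ∀ x, ∑ j, Complex.exp (θ j * Complex.I)
        * ((inner ℝ (h j x) (v j) : ℝ) : ℂ) = 0) :
    (∀ x : L, ∑ j : Fin m,
        (inner ℝ (h j.castSucc x)
          (Real.sin (θ (Fin.last m) - θ j.castSucc) • v j.castSucc) : ℝ) = 0)
    ∧ ∀ j : Fin m, Real.sin (θ (Fin.last m) - θ j.castSucc) ≠ 0 := by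
  constructor
  · intro x
    set r : Fin (m + 1) → ℝ := fun j => (inner ℝ (h j x) (v j) : ℝ) with hr
    have him : ∑ j, Real.sin (θ j) * r j = 0 := by
      have := congrArg Complex.im (heq x)
      simpa [Complex.im_sum, Complex.mul_im, Complex.exp_ofReal_mul_I_re,
        Complex.exp_ofReal_mul_I_im] using this
    have hre : ∑ j, Real.cos (θ j) * r j = 0 := by
      have := congrArg Complex.re (heq x)
      simpa [Complex.re_sum, Complex.mul_re, Complex.exp_ofReal_mul_I_re,
        Complex.exp_ofReal_mul_I_im] using this
    have key : ∑ j : Fin (m + 1), Real.sin (θ (Fin.last m) - θ j) * r j = 0 := by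
      have hterm : ∀ j, Real.sin (θ (Fin.last m) - θ j) * r j
          = Real.sin (θ (Fin.last m)) * (Real.cos (θ j) * r j)
            - Real.cos (θ (Fin.last m)) * (Real.sin (θ j) * r j) := by
        intro j; rw [Real.sin_sub]; ring
      simp_rw [hterm, Finset.sum_sub_distrib, ← Finset.mul_sum, hre, him,
        mul_zero, sub_zero]
    rw [Fin.sum_univ_castSucc, sub_self, Real.sin_zero, zero_mul, add_zero] at key
    simp only [real_inner_smul_right]
    exact key
  · intro j
    have h0 : 0 < θ (Fin.last m) - θ j.castSucc :=
      sub_pos.mpr (hmono (Fin.castSucc_lt_last j))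
    have h1 : θ (Fin.last m) - θ j.castSucc < Real.pi := by
      have := (hrange (Fin.last m)).2
      have := (hrange j.castSucc).1
      linarith
    exact ne_of_gt (Real.sin_pos_of_pos_of_lt_pi h0 h1)
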